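/- Let L̃ be a real-valued differentiable function on ℝ^{n_{L+1}×n₀}, and define L(W₀,…,W_L) = L̃(W_L⋯W₀) for W_k ∈ ℝ^{n_{k+1}×n_k}. Assume min_{0 ≤ k ≤ L+1} n_k = min{n₀, n_{L+1}}. Then any local minimizer (Ŵ₀,…,Ŵ_L) of L satisfies ∇L̃(Â) = 0, where Â = Ŵ_L⋯Ŵ₀. -/

import Mathlib

/-- The partial matrix products `W_k ⋯ W₀` of a deep linear network. -/
noncomputable def matProd (d : ℕ → ℕ)
    (W : (k : ℕ) → Fin (d (k + 1)) → Fin (d k) → ℝ) :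
    (k : ℕ) → Matrix (Fin (d (k + 1))) (Fin (d 0)) ℝ
  | 0 => Matrix.of (W 0)
  | (k + 1) => Matrix.of (W (k + 1)) * matProd d W k

namespace LNLM

variable {d : ℕ → ℕ}

/-- bottom product `W_{k-1} ⋯ W_0`, with `bp 0 = 1`. -/
noncomputable def bp (d : ℕ → ℕ) (W : (k : ℕ) → Fin (d (k + 1)) → Fin (d k) → ℝ) :
    (k : ℕ) → Matrix (Fin (d k)) (Fin (d 0)) ℝ
  | 0 => 1
  | (k + 1) => matProd d W k

@[simp] lemma matProd_zero (W : (k : ℕ) → Fin (d (k + 1)) → Fin (d k) → ℝ) :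
    matProd d W 0 = Matrix.of (W 0) := rfl

lemma matProd_succ (W : (k : ℕ) → Fin (d (k + 1)) → Fin (d k) → ℝ) (k : ℕ) :
    matProd d W (k + 1) = Matrix.of (W (k + 1)) * matProd d W k := rfl

@[simp] lemma bp_zero (W : (k : ℕ) → Fin (d (k + 1)) → Fin (d k) → ℝ) :
    bp d W 0 = 1 := rfl

lemma bp_succ (W : (k : ℕ) → Fin (d (k + 1)) → Fin (d k) → ℝ) (k : ℕ) :
    bp d W (k + 1) = matProd d W k := rfl

/-- products below an updated layer are unchanged -/
lemma matProd_update_of_lt (W : (k : ℕ) → Fin (d (k + 1)) → Fin (d k) → ℝ)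
    {n k : ℕ} (h : n < k) (X : Fin (d (k + 1)) → Fin (d k) → ℝ) :
    matProd d (Function.update W k X) n = matProd d W n := by
  induction n with
  | zero =>
    rw [matProd_zero, Function.update_of_ne (by omega : (0:ℕ) ≠ k), matProd_zero]
  | succ n ih =>
    rw [matProd_succ, matProd_succ, ih (by omega),
      Function.update_of_ne (by omega : n + 1 ≠ k)]

lemma bp_update (W : (k : ℕ) → Fin (d (k + 1)) → Fin (d k) → ℝ)
    {n k : ℕ} (h : n ≤ k) (X : Fin (d (k + 1)) → Fin (d k) → ℝ) :
    bp d (Function.update W k X) n = bp d W n := by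
  cases n with
  | zero => rfl
  | succ n => exact matProd_update_of_lt W (by omega) X

lemma matProd_update_self (W : (k : ℕ) → Fin (d (k + 1)) → Fin (d k) → ℝ)
    (k : ℕ) (X : Fin (d (k + 1)) → Fin (d k) → ℝ) :
    matProd d (Function.update W k X) k = Matrix.of X * bp d W k := by
  cases k with
  | zero => simp [matProd_zero, bp_zero, Function.update_self]
  | succ k =>
    rw [matProd_succ, Function.update_self, bp_succ,
      matProd_update_of_lt W (by omega) X]

lemma matProd_update_add (W : (k : ℕ) → Fin (d (k + 1)) → Fin (d k) → ℝ)
    {n k : ℕ} (h : k ≤ n) (X Y : Fin (d (k + 1)) → Fin (d k) → ℝ) :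
    matProd d (Function.update W k (X + Y)) n
      = matProd d (Function.update W k X) n + matProd d (Function.update W k Y) n := by
  induction n with
  | zero =>
    have hk : k = 0 := by omega
    subst hk
    simp [matProd_zero, Function.update_self]
  | succ n ih =>
    rcases Nat.eq_or_lt_of_le h with h1 | h1
    · subst h1
      rw [matProd_update_self, matProd_update_self, matProd_update_self]
      rw [show Matrix.of (X + Y) = Matrix.of X + Matrix.of Y from rfl, Matrix.add_mul]
    · rw [matProd_succ, matProd_succ, matProd_succ,
        Function.update_of_ne (by omega : n + 1 ≠ k),
        Function.update_of_ne (by omega : n + 1 ≠ k),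
        Function.update_of_ne (by omega : n + 1 ≠ k),
        ih (by omega), Matrix.mul_add]

lemma matProd_update_smul (W : (k : ℕ) → Fin (d (k + 1)) → Fin (d k) → ℝ)
    {n k : ℕ} (h : k ≤ n) (c : ℝ) (X : Fin (d (k + 1)) → Fin (d k) → ℝ) :
    matProd d (Function.update W k (c • X)) n
      = c • matProd d (Function.update W k X) n := by
  induction n with
  | zero =>
    have hk : k = 0 := by omega
    subst hk
    simp [matProd_zero, Function.update_self]
  | succ n ih =>
    rcases Nat.eq_or_lt_of_le h with h1 | h1
    · subst h1
      rw [matProd_update_self, matProd_update_self]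
      rw [show Matrix.of (c • X) = c • Matrix.of X from rfl, Matrix.smul_mul]
    · rw [matProd_succ, matProd_succ,
        Function.update_of_ne (by omega : n + 1 ≠ k),
        Function.update_of_ne (by omega : n + 1 ≠ k),
        ih (by omega), Matrix.mul_smul]

/-- if the updated layer kills the bottom product, the whole product vanishes -/
lemma matProd_update_vanish (W : (k : ℕ) → Fin (d (k + 1)) → Fin (d k) → ℝ)
    {n k : ℕ} (h : k ≤ n) (X : Fin (d (k + 1)) → Fin (d k) → ℝ)
    (hX : Matrix.of X * bp d W k = 0) :
    matProd d (Function.update W k X) n = 0 := by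
  induction n with
  | zero =>
    have hk : k = 0 := by omega
    subst hk
    simpa [matProd_zero, Function.update_self, bp_zero, Matrix.mul_one] using hX
  | succ n ih =>
    rcases Nat.eq_or_lt_of_le h with h1 | h1
    · subst h1
      rw [matProd_update_self]; exact hX
    · rw [matProd_succ, Function.update_of_ne (by omega : n + 1 ≠ k),
        ih (by omega), Matrix.mul_zero]

lemma matProd_eq_mul_bp (W : (k : ℕ) → Fin (d (k + 1)) → Fin (d k) → ℝ) (k : ℕ) :
    matProd d W k = Matrix.of (W k) * bp d W k := by
  cases k with
  | zero => simp [matProd_zero, bp_zero, Matrix.mul_one]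
  | succ k => rfl


section LinAlg

lemma mul_vecMulVec {a b c : ℕ} (M : Matrix (Fin a) (Fin b) ℝ) (u : Fin b → ℝ)
    (w : Fin c → ℝ) : M * Matrix.vecMulVec u w = Matrix.vecMulVec (M.mulVec u) w := by
  ext r s
  simp only [Matrix.mul_apply, Matrix.vecMulVec_apply, Matrix.mulVec, dotProduct,
    Finset.sum_mul]
  exact Finset.sum_congr rfl fun i _ => by ring

lemma vecMulVec_mul {a b c : ℕ} (u : Fin a → ℝ) (v : Fin b → ℝ)
    (Z : Matrix (Fin b) (Fin c) ℝ) :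
    Matrix.vecMulVec u v * Z = Matrix.vecMulVec u (Matrix.vecMul v Z) := by
  ext r s
  simp only [Matrix.mul_apply, Matrix.vecMulVec_apply, Matrix.vecMul, dotProduct,
    Finset.mul_sum]
  exact Finset.sum_congr rfl fun i _ => by ring

@[simp] lemma vecMulVec_zero_left {a b : ℕ} (w : Fin b → ℝ) :
    Matrix.vecMulVec (0 : Fin a → ℝ) w = 0 := by
  ext r s; simp [Matrix.vecMulVec_apply]

@[simp] lemma vecMulVec_zero_right {a b : ℕ} (u : Fin a → ℝ) :
    Matrix.vecMulVec u (0 : Fin b → ℝ) = 0 := by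
  ext r s; simp [Matrix.vecMulVec_apply]

/-- a non-surjective matrix (as a `mulVec` map) with wide domain has a kernel vector -/
lemma exists_mulVec_ker {a b : ℕ} (M : Matrix (Fin a) (Fin b) ℝ) (hab : a ≤ b)
    (hns : ¬ Function.Surjective M.mulVec) : ∃ u : Fin b → ℝ, u ≠ 0 ∧ M.mulVec u = 0 := by
  by_cases hker : LinearMap.ker M.mulVecLin = ⊥
  · exfalso
    apply hns
    have h1 := LinearMap.finrank_range_add_finrank_ker M.mulVecLin
    rw [hker, finrank_bot, add_zero, Module.finrank_fin_fun] at h1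
    have h2 : Module.finrank ℝ (LinearMap.range M.mulVecLin)
        = Module.finrank ℝ (Fin a → ℝ) := by
      refine le_antisymm (Submodule.finrank_le _) ?_
      rw [h1, Module.finrank_fin_fun]; exact hab
    have h3 : LinearMap.range M.mulVecLin = ⊤ := Submodule.eq_top_of_finrank_eq h2
    have h4 : Function.Surjective M.mulVecLin := LinearMap.range_eq_top.mp h3
    intro y
    obtain ⟨x, hx⟩ := h4 y
    exact ⟨x, by simpa [Matrix.mulVecLin_apply] using hx⟩
  · obtain ⟨u, hu, hune⟩ := (Submodule.ne_bot_iff _).mp hker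
    exact ⟨u, hune, by simpa [Matrix.mulVecLin_apply] using hu⟩

lemma exists_vecMul_ker {a b : ℕ} (M : Matrix (Fin a) (Fin b) ℝ) (hab : b ≤ a)
    (hns : ¬ Function.Surjective fun v => Matrix.vecMul v M) :
    ∃ v : Fin a → ℝ, v ≠ 0 ∧ Matrix.vecMul v M = 0 := by
  have h := exists_mulVec_ker M.transpose hab ?_
  · obtain ⟨u, hu, hk⟩ := h
    exact ⟨u, hu, by rwa [Matrix.mulVec_transpose] at hk⟩
  · intro hsurj
    apply hns
    intro y
    obtain ⟨x, hx⟩ := hsurj y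
    exact ⟨x, by rwa [Matrix.mulVec_transpose] at hx⟩

lemma surj_mul_solve {a b c : ℕ} (M : Matrix (Fin a) (Fin b) ℝ)
    (hs : Function.Surjective M.mulVec) (Y : Matrix (Fin a) (Fin c) ℝ) :
    ∃ V : Matrix (Fin b) (Fin c) ℝ, M * V = Y := by
  refine ⟨Matrix.of fun i p => Classical.choose (hs fun r => Y r p) i, ?_⟩
  ext r p
  have := Classical.choose_spec (hs fun r => Y r p)
  have h2 := congrFun this r
  simp only [Matrix.mulVec, dotProduct] at h2
  simpa [Matrix.mul_apply] using h2

lemma surj_vecMul_solve {a b c : ℕ} (Q : Matrix (Fin a) (Fin b) ℝ)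
    (hs : Function.Surjective fun v => Matrix.vecMul v Q) (Y : Matrix (Fin c) (Fin b) ℝ) :
    ∃ V : Matrix (Fin c) (Fin a) ℝ, V * Q = Y := by
  refine ⟨Matrix.of fun r i => Classical.choose (hs fun cc => Y r cc) i, ?_⟩
  ext r p
  have := Classical.choose_spec (hs fun cc => Y r cc)
  have h2 := congrFun this p
  simp only [Matrix.vecMul, dotProduct] at h2
  simpa [Matrix.mul_apply] using h2

/-- decomposition of a matrix into rank-one pieces, by columns -/
lemma eq_sum_vecMulVec_cols {a b : ℕ} (Y : Matrix (Fin a) (Fin b) ℝ) :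
    Y = ∑ p : Fin b, Matrix.vecMulVec (fun r => Y r p) (Pi.single p (1:ℝ)) := by
  ext r s
  rw [Matrix.sum_apply]
  simp [Matrix.vecMulVec_apply, Pi.single_apply]

/-- decomposition of a matrix into rank-one pieces, by rows -/
lemma eq_sum_vecMulVec_rows {a b : ℕ} (Y : Matrix (Fin a) (Fin b) ℝ) :
    Y = ∑ p : Fin a, Matrix.vecMulVec (Pi.single p (1:ℝ)) (fun s => Y p s) := by
  ext r s
  rw [Matrix.sum_apply]
  simp [Matrix.vecMulVec_apply, Pi.single_apply]

end LinAlg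

/-- `Tmul d W n q j Y X` means `X = W_n ⋯ W_j * Y` (with the empty product when `j = n+1`). -/
inductive Tmul (d : ℕ → ℕ) (W : (k : ℕ) → Fin (d (k + 1)) → Fin (d k) → ℝ) (n q : ℕ) :
    (j : ℕ) → Matrix (Fin (d j)) (Fin q) ℝ → Matrix (Fin (d (n + 1))) (Fin q) ℝ → Prop
  | base (Y : Matrix (Fin (d (n + 1))) (Fin q) ℝ) : Tmul d W n q (n + 1) Y Y
  | step {j : ℕ} {Y : Matrix (Fin (d j)) (Fin q) ℝ} {X : Matrix (Fin (d (n + 1))) (Fin q) ℝ} :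
      Tmul d W n q (j + 1) (Matrix.of (W j) * Y) X → Tmul d W n q j Y X

namespace Tmul

variable {d : ℕ → ℕ} {W : (k : ℕ) → Fin (d (k + 1)) → Fin (d k) → ℝ} {n q : ℕ}

lemma le {j : ℕ} {Y : Matrix (Fin (d j)) (Fin q) ℝ} {X : Matrix (Fin (d (n + 1))) (Fin q) ℝ}
    (h : Tmul d W n q j Y X) : j ≤ n + 1 := by
  induction h with
  | base => exact le_rfl
  | step _ ih => omega

lemma inv_base {Y X : Matrix (Fin (d (n + 1))) (Fin q) ℝ}
    (h : Tmul d W n q (n + 1) Y X) : X = Y := by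
  cases h with
  | base => rfl
  | step h' => exact absurd h'.le (by omega)

lemma exists_gap : ∀ (i j : ℕ), j + i = n + 1 → ∀ Y : Matrix (Fin (d j)) (Fin q) ℝ,
    ∃ X, Tmul d W n q j Y X := by
  intro i
  induction i with
  | zero =>
    intro j hj Y
    have : j = n + 1 := by omega
    subst this
    exact ⟨Y, base Y⟩
  | succ i ih =>
    intro j hj Y
    obtain ⟨X, hX⟩ := ih (j + 1) (by omega) (Matrix.of (W j) * Y)
    exact ⟨X, step hX⟩

lemma exists_of_le {j : ℕ} (hj : j ≤ n + 1) (Y : Matrix (Fin (d j)) (Fin q) ℝ) :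
    ∃ X, Tmul d W n q j Y X :=
  exists_gap (n + 1 - j) j (by omega) Y

lemma uniq {j : ℕ} {Y : Matrix (Fin (d j)) (Fin q) ℝ}
    {X X' : Matrix (Fin (d (n + 1))) (Fin q) ℝ}
    (h : Tmul d W n q j Y X) (h' : Tmul d W n q j Y X') : X = X' := by
  induction h with
  | base => exact (h'.inv_base).symm
  | step h1 ih =>
    cases h' with
    | base => exact absurd h1.le (by omega)
    | step h2 => exact ih h2

/-- `Tmul` only depends on the weights above its level -/
lemma agree {W' : (k : ℕ) → Fin (d (k + 1)) → Fin (d k) → ℝ}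
    {j : ℕ} {Y : Matrix (Fin (d j)) (Fin q) ℝ} {X : Matrix (Fin (d (n + 1))) (Fin q) ℝ}
    (h : Tmul d W n q j Y X) (hW : ∀ i, j ≤ i → W i = W' i) : Tmul d W' n q j Y X := by
  induction h with
  | base => exact base _
  | step h1 ih =>
    rename_i j1 Y1 X1
    refine step ?_
    rw [← hW j1 le_rfl]
    exact ih fun i hi => hW i (by omega)

/-- the factorization lemma: `matProd` of an updated family is `T * (V * bp)` in `Tmul` form -/
lemma of_update : ∀ (i j : ℕ), j + i = n →
    ∀ (W' : (k : ℕ) → Fin (d (k + 1)) → Fin (d k) → ℝ)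
      (V : Fin (d (j + 1)) → Fin (d j) → ℝ),
    Tmul d W' n (d 0) (j + 1) (Matrix.of V * bp d W' j)
      (matProd d (Function.update W' j V) n) := by
  intro i
  induction i with
  | zero =>
    intro j hj W' V
    have : j = n := by omega
    subst this
    rw [matProd_update_self]
    exact base _
  | succ i ih =>
    intro j hj W' V
    have h1 := ih (j + 1) (by omega) (Function.update W' j V) (W' (j + 1))
    have e1 : Function.update (Function.update W' j V) (j + 1)
        (W' (j + 1)) = Function.update W' j V := by
      have : W' (j + 1) = Function.update W' j V (j + 1) :=
        (Function.update_of_ne (by omega : j + 1 ≠ j) _ _).symm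
      rw [this, Function.update_eq_self]
    rw [e1] at h1
    have e2 : bp d (Function.update W' j V) (j + 1) = Matrix.of V * bp d W' j := by
      rw [bp_succ, matProd_update_self]
    rw [e2] at h1
    have h2 := h1.agree (W' := W')
      (fun i hi => Function.update_of_ne (by omega : i ≠ j) _ _)
    exact step h2

lemma of_update' {j : ℕ} (hj : j ≤ n)
    (W' : (k : ℕ) → Fin (d (k + 1)) → Fin (d k) → ℝ)
    (V : Fin (d (j + 1)) → Fin (d j) → ℝ) :
    Tmul d W' n (d 0) (j + 1) (Matrix.of V * bp d W' j)
      (matProd d (Function.update W' j V) n) :=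
  of_update (n - j) j (by omega) W' V

/-- factoring through the explicit top-product matrix -/
lemma factor : ∀ (i j : ℕ), j + i = n + 1 →
    ∀ (q' : ℕ) {Y : Matrix (Fin (d j)) (Fin q') ℝ} {X : Matrix (Fin (d (n + 1))) (Fin q') ℝ}
      {T : Matrix (Fin (d (n + 1))) (Fin (d j)) ℝ},
    Tmul d W n q' j Y X → Tmul d W n (d j) j 1 T → X = T * Y := by
  intro i
  induction i with
  | zero =>
    intro j hj q' Y X T h1 h2
    have : j = n + 1 := by omega
    subst this
    rw [h1.inv_base, h2.inv_base, Matrix.one_mul]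
  | succ i ih =>
    intro j hj q' Y X T h1 h2
    have hjn : j ≠ n + 1 := by omega
    cases h1 with
    | base => exact absurd rfl hjn
    | step h1' =>
      cases h2 with
      | base => exact absurd rfl hjn
      | step h2' =>
        obtain ⟨T1, hT1⟩ := exists_of_le (n := n) (W := W) (q := d (j + 1)) (j := j + 1)
          (by omega) 1
        have e1 : X = T1 * (Matrix.of (W j) * Y) := ih (j + 1) (by omega) q' h1' hT1
        have e2 : T = T1 * (Matrix.of (W j) * (1 : Matrix (Fin (d j)) (Fin (d j)) ℝ)) :=
          ih (j + 1) (by omega) (d j) h2' hT1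
        rw [Matrix.mul_one] at e2
        rw [e1, e2, Matrix.mul_assoc]

lemma factor' {j : ℕ} {Y : Matrix (Fin (d j)) (Fin q) ℝ}
    {X : Matrix (Fin (d (n + 1))) (Fin q) ℝ} {T : Matrix (Fin (d (n + 1))) (Fin (d j)) ℝ}
    (h1 : Tmul d W n q j Y X) (h2 : Tmul d W n (d j) j 1 T) : X = T * Y :=
  factor (n + 1 - j) j (by have := h1.le; omega) q h1 h2

end Tmul

end LNLM

open LNLM in
/-- Theorem: let `L̃` be differentiable on `ℝ^{n_{L+1}×n₀}` and
`L(W₀,…,W_L) = L̃(W_L ⋯ W₀)`, with no bottleneck (`min_k n_k = min{n₀, n_{L+1}}`).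
Then any local minimizer `Ŵ` of `L` satisfies `∇L̃(Â) = 0` for `Â = Ŵ_L ⋯ Ŵ₀`. -/
theorem linear_net_local_minima_are_critical
    (d : ℕ → ℕ) (L : ℕ)
    (hbot : ∀ k, k ≤ L + 1 → min (d 0) (d (L + 1)) ≤ d k)
    (Lt : (Fin (d (L + 1)) → Fin (d 0) → ℝ) → ℝ)
    (hdiff : Differentiable ℝ Lt)
    (W : (k : ℕ) → Fin (d (k + 1)) → Fin (d k) → ℝ)
    (hlocmin : ∃ ε > (0 : ℝ), ∀ W' : (k : ℕ) → Fin (d (k + 1)) → Fin (d k) → ℝ,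
      (∀ k, k ≤ L → ∀ i j, |W' k i j - W k i j| < ε) →
      Lt (fun i j => matProd d W L i j) ≤ Lt (fun i j => matProd d W' L i j)) :
    fderiv ℝ Lt (fun i j => matProd d W L i j) = 0 := by
  classical
  obtain ⟨ε, hε, hmin⟩ := hlocmin
  set φ : (Fin (d (L + 1)) → Fin (d 0) → ℝ) →L[ℝ] ℝ :=
    fderiv ℝ Lt (fun i j => matProd d W L i j) with hφ
  -- the base point is admissible
  have hPW : ∀ k, k ≤ L → ∀ a b, |W k a b - W k a b| < ε := by
    intro k _ a b; simpa using hε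
  -- eventual nearness of one-layer perturbations
  have Fnear : ∀ (Wt : (k : ℕ) → Fin (d (k + 1)) → Fin (d k) → ℝ),
      (∀ k, k ≤ L → ∀ a b, |Wt k a b - W k a b| < ε) →
      ∀ (k₀ : ℕ), k₀ ≤ L → ∀ X : Fin (d (k₀ + 1)) → Fin (d k₀) → ℝ,
      ∀ᶠ t in nhds (0 : ℝ), ∀ k, k ≤ L → ∀ a b,
        |Function.update Wt k₀ (Wt k₀ + t • X) k a b - W k a b| < ε := by
    intro Wt hn k₀ hk₀ X
    have h1 : ∀ᶠ t in nhds (0 : ℝ), ∀ (a : Fin (d (k₀ + 1))) (b : Fin (d k₀)),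
        |Wt k₀ a b + t * X a b - W k₀ a b| < ε := by
      rw [Filter.eventually_all]
      intro a
      rw [Filter.eventually_all]
      intro b
      have hc : Continuous fun t : ℝ => |Wt k₀ a b + t * X a b - W k₀ a b| := by
        fun_prop
      have h0 : |Wt k₀ a b + 0 * X a b - W k₀ a b| < ε := by
        simpa using hn k₀ hk₀ a b
      exact Filter.Tendsto.eventually_lt_const h0 (hc.tendsto 0)
    filter_upwards [h1] with t ht k hk a b
    by_cases hkk : k = k₀
    · subst hkk
      rw [Function.update_self]
      simpa [smul_eq_mul] using ht a b
    · rw [Function.update_of_ne hkk]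
      exact hn k hk a b
  -- choose a nonzero admissible perturbation parameter
  have pick : ∀ (Wt : (k : ℕ) → Fin (d (k + 1)) → Fin (d k) → ℝ),
      (∀ k, k ≤ L → ∀ a b, |Wt k a b - W k a b| < ε) →
      ∀ (k₀ : ℕ), k₀ ≤ L → ∀ X : Fin (d (k₀ + 1)) → Fin (d k₀) → ℝ,
      ∃ t₀ : ℝ, t₀ ≠ 0 ∧ ∀ k, k ≤ L → ∀ a b,
        |Function.update Wt k₀ (Wt k₀ + t₀ • X) k a b - W k a b| < ε := by
    intro Wt hn k₀ hk₀ X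
    have hev := (Fnear Wt hn k₀ hk₀ X).filter_mono
      (nhdsWithin_le_nhds : nhdsWithin (0:ℝ) {(0:ℝ)}ᶜ ≤ nhds 0)
    have hne : ∀ᶠ t in nhdsWithin (0:ℝ) {(0:ℝ)}ᶜ, t ≠ 0 :=
      eventually_mem_nhdsWithin.mono fun x hx => hx
    obtain ⟨t₀, h1, h2⟩ := (hne.and hev).exists
    exact ⟨t₀, h1, h2⟩
  -- first-order conditions at all admissible points
  have hF : ∀ (k : ℕ), k ≤ L →
      ∀ (Wt : (k : ℕ) → Fin (d (k + 1)) → Fin (d k) → ℝ),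
      (∀ k, k ≤ L → ∀ a b, |Wt k a b - W k a b| < ε) →
      matProd d Wt L = matProd d W L →
      ∀ V : Fin (d (k + 1)) → Fin (d k) → ℝ,
      φ (matProd d (Function.update Wt k V) L) = 0 := by
    intro k hk Wt hn hprod V
    set Af : Fin (d (L + 1)) → Fin (d 0) → ℝ := fun i j => matProd d W L i j with hAf
    set Mf : Fin (d (L + 1)) → Fin (d 0) → ℝ :=
      fun i j => matProd d (Function.update Wt k V) L i j with hMf
    have curve : ∀ t : ℝ,
        matProd d (Function.update Wt k (Wt k + t • V)) L
          = matProd d W L + t • matProd d (Function.update Wt k V) L := by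
      intro t
      rw [matProd_update_add Wt hk, Function.update_eq_self,
        matProd_update_smul Wt hk, hprod]
    have conv : ∀ t : ℝ,
        (fun i j => matProd d (Function.update Wt k (Wt k + t • V)) L i j)
          = Af + t • Mf := by
      intro t
      funext i j
      rw [curve t]; rfl
    have hloc : IsLocalMin (fun t : ℝ => Lt (Af + t • Mf)) 0 := by
      have hev := Fnear Wt hn k hk V
      filter_upwards [hev] with t ht
      have hcomp := hmin (Function.update Wt k (Wt k + t • V)) ht
      calc Lt (Af + (0:ℝ) • Mf) = Lt (fun i j => matProd d W L i j) := by
            rw [zero_smul, add_zero, hAf]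
        _ ≤ Lt (fun i j => matProd d (Function.update Wt k (Wt k + t • V)) L i j) :=
            hcomp
        _ = Lt (Af + t • Mf) := by rw [conv t]
    have hc : HasDerivAt (fun t : ℝ => Af + t • Mf) Mf 0 := by
      have h1 : HasDerivAt (fun t : ℝ => t • Mf) Mf 0 := by
        simpa using (hasDerivAt_id (0:ℝ)).smul_const Mf
      simpa using h1.const_add Af
    have hfd : HasFDerivAt Lt φ (Af + (0:ℝ) • Mf) := by
      rw [zero_smul, add_zero, hAf]
      exact (hdiff _).hasFDerivAt
    have hg : HasDerivAt (fun t : ℝ => Lt (Af + t • Mf)) (φ Mf) 0 := by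
      have h2 := hfd.comp_hasDerivAt 0 hc
      exact h2
    have h0 := hloc.deriv_eq_zero
    rw [hg.deriv] at h0
    exact h0
  -- conclude
  refine ContinuousLinearMap.ext fun Y => ?_
  rw [ContinuousLinearMap.zero_apply]
  rcases le_total (d (L + 1)) (d 0) with hAB | hAB
  · -- case A : d (L+1) ≤ d 0, downward induction on the bottom products
    have key : ∀ (i : ℕ), ∀ j, j + i = L →
        ∀ (Wt : (k : ℕ) → Fin (d (k + 1)) → Fin (d k) → ℝ),
        (∀ k, k ≤ L → ∀ a b, |Wt k a b - W k a b| < ε) →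
        matProd d Wt L = matProd d W L →
        ∀ Y' : Matrix (Fin (d (L + 1))) (Fin (d j)) ℝ,
        φ (Y' * bp d Wt j) = 0 := by
      intro i
      induction i with
      | zero =>
        intro j hj Wt hn hprod Y'
        have hjL : j = L := by omega
        subst hjL
        have h1 := hF j le_rfl Wt hn hprod Y'
        replace h1 := (congrArg φ (matProd_update_self Wt j Y')).symm.trans h1
        exact h1
      | succ i ih =>
        intro j hj Wt hn hprod Y'
        obtain ⟨T, hT⟩ := Tmul.exists_of_le (d := d) (W := Wt) (n := L)
          (q := d (j + 1)) (j := j + 1) (by omega) 1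
        by_cases hs : Function.Surjective T.mulVec
        · obtain ⟨V, hV⟩ := surj_mul_solve T hs Y'
          have h1 := hF j (by omega) Wt hn hprod V
          have h2 : matProd d (Function.update Wt j V) L
              = T * (Matrix.of V * bp d Wt j) :=
            (Tmul.of_update' (by omega) Wt V).factor' hT
          rw [h2, ← Matrix.mul_assoc] at h1
          have e : T * Matrix.of V = Y' := hV
          rwa [e] at h1
        · have hdim : d (L + 1) ≤ d (j + 1) := by
            have h3 := hbot (j + 1) (by omega)
            rwa [min_eq_right hAB] at h3
          obtain ⟨u, hu0, huk⟩ := exists_mulVec_ker T hdim hs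
          have hcb : ∀ (c : Fin (d (L + 1)) → ℝ) (b : Fin (d j) → ℝ),
              φ (Matrix.vecMulVec c b * bp d Wt j) = 0 := by
            intro c b
            set X₀ : Fin (d (j + 1)) → Fin (d j) → ℝ :=
              Matrix.vecMulVec u b with hX₀
            have hzero : matProd d (Function.update Wt j X₀) L = 0 := by
              have h2 : matProd d (Function.update Wt j X₀) L
                  = T * (Matrix.of X₀ * bp d Wt j) :=
                (Tmul.of_update' (by omega) Wt X₀).factor' hT
              rw [h2, ← Matrix.mul_assoc]
              have hTX : T * Matrix.of X₀ = 0 := by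
                show T * Matrix.vecMulVec u b = 0
                rw [mul_vecMulVec, huk, vecMulVec_zero_left]
              rw [hTX, Matrix.zero_mul]
            have hpres : ∀ t : ℝ,
                matProd d (Function.update Wt j (Wt j + t • X₀)) L
                  = matProd d W L := by
              intro t
              rw [matProd_update_add Wt (by omega : j ≤ L), Function.update_eq_self,
                matProd_update_smul Wt (by omega : j ≤ L),
                hprod, hzero, smul_zero, add_zero]
            obtain ⟨t₀, ht₀ne, ht₀near⟩ := pick Wt hn j (by omega) X₀
            set W2 := Function.update Wt j (Wt j + t₀ • X₀) with hW2
            have hsub : ∀ Y2 : Matrix (Fin (d (L + 1))) (Fin (d (j + 1))) ℝ,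
                φ (Y2 * (Matrix.of X₀ * bp d Wt j)) = 0 := by
              intro Y2
              have J1 := ih (j + 1) (by omega) W2 ht₀near (hpres t₀) Y2
              have J2 := ih (j + 1) (by omega) Wt hn hprod Y2
              have e1 : bp d W2 (j + 1)
                  = (Matrix.of (Wt j) + t₀ • Matrix.of X₀) * bp d Wt j := by
                rw [bp_succ, hW2, matProd_update_self]
                rfl
              have e2 : bp d Wt (j + 1) = Matrix.of (Wt j) * bp d Wt j := by
                rw [bp_succ, matProd_eq_mul_bp]
              rw [e1] at J1
              rw [e2] at J2
              have expand : Y2 * ((Matrix.of (Wt j) + t₀ • Matrix.of X₀) * bp d Wt j)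
                  = Y2 * (Matrix.of (Wt j) * bp d Wt j)
                    + t₀ • (Y2 * (Matrix.of X₀ * bp d Wt j)) := by
                rw [Matrix.add_mul, Matrix.smul_mul, Matrix.mul_add, Matrix.mul_smul]
              rw [expand] at J1
              have J3 : φ (Y2 * (Matrix.of (Wt j) * bp d Wt j)) + t₀ * φ (Y2 * (Matrix.of X₀ * bp d Wt j)) = 0 := by
                exact (congrArg (φ (Y2 * (Matrix.of (Wt j) * bp d Wt j)) + ·) (map_smul φ t₀ (Y2 * (Matrix.of X₀ * bp d Wt j)))).symm.trans
                  ((map_add φ (Y2 * (Matrix.of (Wt j) * bp d Wt j)) (t₀ • (Y2 * (Matrix.of X₀ * bp d Wt j)))).symm.trans J1)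
              rw [J2, zero_add] at J3
              exact (mul_eq_zero.mp J3).resolve_left ht₀ne
            obtain ⟨i₀, hi₀⟩ := Function.ne_iff.mp hu0
            have hi₀' : u i₀ ≠ 0 := by simpa using hi₀
            set Yc : Matrix (Fin (d (L + 1))) (Fin (d (j + 1))) ℝ :=
              Matrix.of fun r i =>
                c r * (Pi.single i₀ ((u i₀)⁻¹) : Fin (d (j + 1)) → ℝ) i with hYc
            have hmv : Yc.mulVec u = c := by
              funext r
              simp only [hYc, Matrix.mulVec, dotProduct, Matrix.of_apply,
                Pi.single_apply]
              have hterm : ∀ x ∈ Finset.univ,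
                  c r * (if x = i₀ then (u i₀)⁻¹ else 0) * u x
                    = if x = i₀ then c r * ((u i₀)⁻¹ * u x) else 0 := by
                intro x _
                by_cases hx : x = i₀
                · rw [if_pos hx, if_pos hx, mul_assoc]
                · rw [if_neg hx, if_neg hx, mul_zero, zero_mul]
              rw [Finset.sum_congr rfl hterm,
                Finset.sum_ite_eq' Finset.univ i₀ (fun x => c r * ((u i₀)⁻¹ * u x))]
              simp [inv_mul_cancel₀ hi₀']
            have hYX : Yc * Matrix.of X₀ = Matrix.vecMulVec c b := by
              show Yc * Matrix.vecMulVec u b = Matrix.vecMulVec c b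
              rw [mul_vecMulVec, hmv]
            have h5 := hsub Yc
            rwa [← Matrix.mul_assoc, hYX] at h5
          have dec : Y' * bp d Wt j = ∑ p : Fin (d j),
              Matrix.vecMulVec (fun r => Y' r p) (Pi.single p (1:ℝ)) * bp d Wt j := by
            conv_lhs => rw [eq_sum_vecMulVec_cols Y']
            rw [Matrix.sum_mul]
          calc φ (Y' * bp d Wt j)
              = φ (∑ p : Fin (d j),
                  Matrix.vecMulVec (fun r => Y' r p) (Pi.single p (1:ℝ)) * bp d Wt j) :=
                congrArg φ dec
            _ = ∑ p : Fin (d j),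
                  φ (Matrix.vecMulVec (fun r => Y' r p) (Pi.single p (1:ℝ)) * bp d Wt j) :=
                map_sum φ _ Finset.univ
            _ = 0 := Finset.sum_eq_zero fun p _ => hcb _ _
    have h6 := key L 0 (by omega) W hPW rfl (Matrix.of Y)
    have e : Matrix.of Y * bp d W 0 = Matrix.of Y := by
      rw [bp_zero, Matrix.mul_one]
    rw [e] at h6
    exact h6
  · -- case B : d 0 ≤ d (L+1), upward induction with Tmul
    have key : ∀ (j : ℕ), j ≤ L →
        ∀ (Wt : (k : ℕ) → Fin (d (k + 1)) → Fin (d k) → ℝ),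
        (∀ k, k ≤ L → ∀ a b, |Wt k a b - W k a b| < ε) →
        matProd d Wt L = matProd d W L →
        ∀ (Y' : Matrix (Fin (d (j + 1))) (Fin (d 0)) ℝ)
          (X : Matrix (Fin (d (L + 1))) (Fin (d 0)) ℝ),
        Tmul d Wt L (d 0) (j + 1) Y' X → φ X = 0 := by
      intro j
      induction j with
      | zero =>
        intro hj Wt hn hprod Y' X hX
        have h4 := Tmul.of_update' (by omega : 0 ≤ L) Wt Y'
        rw [bp_zero, Matrix.mul_one] at h4
        have e : X = matProd d (Function.update Wt 0 Y') L := hX.uniq h4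
        rw [e]
        exact hF 0 (by omega) Wt hn hprod Y'
      | succ n ihn =>
        intro hj Wt hn hprod Y' X hX
        by_cases hs : Function.Surjective fun v => Matrix.vecMul v (bp d Wt (n + 1))
        · obtain ⟨V, hV⟩ := surj_vecMul_solve (bp d Wt (n + 1)) hs Y'
          have h4 := Tmul.of_update' (by omega : n + 1 ≤ L) Wt V
          have e : Matrix.of V * bp d Wt (n + 1) = Y' := hV
          rw [e] at h4
          have e2 : X = matProd d (Function.update Wt (n + 1) V) L := hX.uniq h4
          rw [e2]
          exact hF (n + 1) (by omega) Wt hn hprod V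
        · have hdim : d 0 ≤ d (n + 1) := by
            have h3 := hbot (n + 1) (by omega)
            rwa [min_eq_left hAB] at h3
          obtain ⟨v, hv0, hvk⟩ := exists_vecMul_ker (bp d Wt (n + 1)) hdim hs
          obtain ⟨T2, hT2⟩ := Tmul.exists_of_le (d := d) (W := Wt) (n := L)
            (q := d (n + 2)) (j := n + 2) (by omega) 1
          have haw : ∀ (a : Fin (d (n + 2)) → ℝ) (w : Fin (d 0) → ℝ),
              φ (T2 * Matrix.vecMulVec a w) = 0 := by
            intro a w
            set X₀ : Fin (d (n + 2)) → Fin (d (n + 1)) → ℝ :=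
              Matrix.vecMulVec a v with hX₀
            have hzero : matProd d (Function.update Wt (n + 1) X₀) L = 0 := by
              apply matProd_update_vanish Wt (by omega : n + 1 ≤ L)
              show Matrix.vecMulVec a v * bp d Wt (n + 1) = 0
              rw [vecMulVec_mul, hvk, vecMulVec_zero_right]
            have hpres : ∀ t : ℝ,
                matProd d (Function.update Wt (n + 1) (Wt (n + 1) + t • X₀)) L
                  = matProd d W L := by
              intro t
              rw [matProd_update_add Wt (by omega : n + 1 ≤ L),
                Function.update_eq_self,
                matProd_update_smul Wt (by omega : n + 1 ≤ L),
                hprod, hzero, smul_zero, add_zero]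
            obtain ⟨t₀, ht₀ne, ht₀near⟩ := pick Wt hn (n + 1) (by omega) X₀
            set W2 := Function.update Wt (n + 1) (Wt (n + 1) + t₀ • X₀) with hW2
            have hZ : ∀ Z : Matrix (Fin (d (n + 1))) (Fin (d 0)) ℝ,
                φ (T2 * (Matrix.of X₀ * Z)) = 0 := by
              intro Z
              obtain ⟨X1, hX1⟩ := Tmul.exists_of_le (d := d) (W := Wt) (n := L)
                (q := d 0) (j := n + 2) (by omega) (Matrix.of (Wt (n + 1)) * Z)
              have J2 : φ X1 = 0 :=
                ihn (by omega) Wt hn hprod Z X1 (Tmul.step hX1)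
              have e1 : X1 = T2 * (Matrix.of (Wt (n + 1)) * Z) := hX1.factor' hT2
              obtain ⟨X2, hX2⟩ := Tmul.exists_of_le (d := d) (W := Wt) (n := L)
                (q := d 0) (j := n + 2) (by omega)
                ((Matrix.of (Wt (n + 1)) + t₀ • Matrix.of X₀) * Z)
              have e2 : X2 = T2 * ((Matrix.of (Wt (n + 1)) + t₀ • Matrix.of X₀) * Z) :=
                hX2.factor' hT2
              have hX2' : Tmul d W2 L (d 0) (n + 2)
                  ((Matrix.of (Wt (n + 1)) + t₀ • Matrix.of X₀) * Z) X2 :=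
                hX2.agree fun i hi =>
                  (Function.update_of_ne (by omega : i ≠ n + 1) _ _).symm
              have step2 : Tmul d W2 L (d 0) (n + 1) Z X2 := by
                apply Tmul.step
                have eW2 : Matrix.of (W2 (n + 1))
                    = Matrix.of (Wt (n + 1)) + t₀ • Matrix.of X₀ := by
                  rw [hW2, Function.update_self]
                  rfl
                rw [eW2]
                exact hX2'
              have J1 : φ X2 = 0 :=
                ihn (by omega) W2 ht₀near (hpres t₀) Z X2 step2
              rw [e1] at J2
              rw [e2] at J1
              have expand : T2 * ((Matrix.of (Wt (n + 1)) + t₀ • Matrix.of X₀) * Z)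
                  = T2 * (Matrix.of (Wt (n + 1)) * Z)
                    + t₀ • (T2 * (Matrix.of X₀ * Z)) := by
                rw [Matrix.add_mul, Matrix.smul_mul, Matrix.mul_add, Matrix.mul_smul]
              rw [expand] at J1
              have J3 : φ (T2 * (Matrix.of (Wt (n + 1)) * Z)) + t₀ * φ (T2 * (Matrix.of X₀ * Z)) = 0 := by
                exact (congrArg (φ (T2 * (Matrix.of (Wt (n + 1)) * Z)) + ·) (map_smul φ t₀ (T2 * (Matrix.of X₀ * Z)))).symm.trans
                  ((map_add φ (T2 * (Matrix.of (Wt (n + 1)) * Z)) (t₀ • (T2 * (Matrix.of X₀ * Z)))).symm.trans J1)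
              rw [J2, zero_add] at J3
              exact (mul_eq_zero.mp J3).resolve_left ht₀ne
            obtain ⟨i₀, hi₀⟩ := Function.ne_iff.mp hv0
            have hi₀' : v i₀ ≠ 0 := by simpa using hi₀
            set Zw : Matrix (Fin (d (n + 1))) (Fin (d 0)) ℝ :=
              Matrix.of fun i cc =>
                (Pi.single i₀ ((v i₀)⁻¹) : Fin (d (n + 1)) → ℝ) i * w cc with hZw
            have hmv : Matrix.vecMul v Zw = w := by
              funext cc
              simp only [hZw, Matrix.vecMul, dotProduct, Matrix.of_apply,
                Pi.single_apply]
              have hterm : ∀ x ∈ Finset.univ,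
                  v x * ((if x = i₀ then (v i₀)⁻¹ else 0) * w cc)
                    = if x = i₀ then v x * ((v i₀)⁻¹ * w cc) else 0 := by
                intro x _
                by_cases hx : x = i₀
                · rw [if_pos hx, if_pos hx]
                · rw [if_neg hx, if_neg hx, zero_mul, mul_zero]
              rw [Finset.sum_congr rfl hterm,
                Finset.sum_ite_eq' Finset.univ i₀ (fun x => v x * ((v i₀)⁻¹ * w cc))]
              simp [← mul_assoc, mul_inv_cancel₀ hi₀']
            have hvZ : Matrix.of X₀ * Zw = Matrix.vecMulVec a w := by
              show Matrix.vecMulVec a v * Zw = Matrix.vecMulVec a w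
              rw [vecMulVec_mul, hmv]
            have h5 := hZ Zw
            rwa [hvZ] at h5
          have eX : X = T2 * Y' := hX.factor' hT2
          have dec : T2 * Y' = ∑ p : Fin (d (n + 2)),
              T2 * Matrix.vecMulVec (Pi.single p (1:ℝ)) (fun s => Y' p s) := by
            conv_lhs => rw [eq_sum_vecMulVec_rows Y']
            rw [Matrix.mul_sum]
          calc φ X = φ (∑ p : Fin (d (n + 2)),
                  T2 * Matrix.vecMulVec (Pi.single p (1:ℝ)) (fun s => Y' p s)) :=
                congrArg φ (eX.trans dec)
            _ = ∑ p : Fin (d (n + 2)),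
                  φ (T2 * Matrix.vecMulVec (Pi.single p (1:ℝ)) (fun s => Y' p s)) :=
                map_sum φ _ Finset.univ
            _ = 0 := Finset.sum_eq_zero fun p _ => haw _ _
    exact key L le_rfl W hPW rfl (Matrix.of Y) (Matrix.of Y) (Tmul.base (Matrix.of Y))
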